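/- Let κ₁, κ₂ be real numbers with κ₁ > κ₂ and κ₁ ≠ κ₂. Define f(x) = x · ln(1 − κ₁ + (κ₁ − κ₂)/x). Then the derivative f′ is strictly decreasing on the set S = {x ∈ ℝ : x > 0 and x·(1 − κ₁) + κ₁ − κ₂ > 0}. -/

import Mathlib

/-- Strict monotonicity of the first derivative on the domain. -/
theorem deriv_strictAntiOn
    (κ₁ κ₂ : ℝ) (hκ : κ₂ < κ₁) :
    StrictAntiOn (deriv (fun x : ℝ => x * Real.log (1 - κ₁ + (κ₁ - κ₂) / x)))
      {x : ℝ | 0 < x ∧ 0 < x * (1 - κ₁) + κ₁ - κ₂} := by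
  have ha : 0 < κ₁ - κ₂ := sub_pos.mpr hκ
  set S : Set ℝ := {x : ℝ | 0 < x ∧ 0 < x * (1 - κ₁) + κ₁ - κ₂} with hSdef
  set g : ℝ → ℝ := fun x =>
    Real.log (1 - κ₁ + (κ₁ - κ₂) / x) - (κ₁ - κ₂) / (x * (1 - κ₁) + κ₁ - κ₂) with hgdef
  have hopen : IsOpen S := by
    have : S = {x : ℝ | 0 < x} ∩ {x : ℝ | 0 < x * (1 - κ₁) + κ₁ - κ₂} := rfl
    rw [this]
    exact (isOpen_lt continuous_const continuous_id).inter
      (isOpen_lt continuous_const (by continuity))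
  have key : ∀ u v p q : ℝ, 0 < u → 0 < v → 0 ≤ p → 0 ≤ q → p + q = 1 →
      0 < p * u + q * v := by
    intro u v p q hu hv hp hq hpq
    rcases hp.eq_or_lt with h | h
    · have hq1 : q = 1 := by linarith
      simp [← h, hq1, hv]
    · nlinarith [mul_nonneg hq hv.le, mul_pos h hu]
  have hconv : Convex ℝ S := by
    intro x hx y hy p q hp hq hpq
    refine ⟨?_, ?_⟩
    · simpa [smul_eq_mul] using key x y p q hx.1 hy.1 hp hq hpq
    · have := key _ _ p q hx.2 hy.2 hp hq hpq
      simp only [smul_eq_mul]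
      nlinarith [this]
  -- derivative of f equals g on S
  have hf' : ∀ x ∈ S, HasDerivAt (fun x : ℝ => x * Real.log (1 - κ₁ + (κ₁ - κ₂) / x))
      (g x) x := by
    rintro x ⟨hx, hD⟩
    have hx0 : x ≠ 0 := ne_of_gt hx
    have hu : (1 - κ₁ + (κ₁ - κ₂) / x) = (x * (1 - κ₁) + κ₁ - κ₂) / x := by
      field_simp; ring
    have hupos : 0 < 1 - κ₁ + (κ₁ - κ₂) / x := by rw [hu]; positivity
    have h1 : HasDerivAt (fun x : ℝ => 1 - κ₁ + (κ₁ - κ₂) / x)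
        (-(κ₁ - κ₂) / x ^ 2) x := by
      have heq : (fun x : ℝ => 1 - κ₁ + (κ₁ - κ₂) / x)
          = fun x : ℝ => 1 - κ₁ + (κ₁ - κ₂) * x⁻¹ := by
        funext y; rw [div_eq_mul_inv]
      rw [heq]
      have h2 := ((hasDerivAt_inv hx0).const_mul (κ₁ - κ₂)).const_add (1 - κ₁)
      convert h2 using 1
      · rfl
      · rfl
      field_simp
    have hlog : HasDerivAt (fun x : ℝ => Real.log (1 - κ₁ + (κ₁ - κ₂) / x))
        ((-(κ₁ - κ₂) / x ^ 2) / (1 - κ₁ + (κ₁ - κ₂) / x)) x := h1.log (ne_of_gt hupos)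
    have hmul := (hasDerivAt_id x).mul hlog
    convert hmul using 1
    · rfl
    · rfl
    · rfl
    rw [hgdef]
    simp only [id_eq]
    rw [hu]
    have hDne : x * (1 - κ₁) + κ₁ - κ₂ ≠ 0 := ne_of_gt hD
    field_simp
    ring
  -- derivative of g is negative on S
  have hg' : ∀ x ∈ S, HasDerivAt g (-((κ₁ - κ₂) ^ 2 / (x * (x * (1 - κ₁) + κ₁ - κ₂) ^ 2))) x := by
    rintro x ⟨hx, hD⟩
    have hx0 : x ≠ 0 := ne_of_gt hx
    have hDne : x * (1 - κ₁) + κ₁ - κ₂ ≠ 0 := ne_of_gt hD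
    have hu : (1 - κ₁ + (κ₁ - κ₂) / x) = (x * (1 - κ₁) + κ₁ - κ₂) / x := by
      field_simp; ring
    have hupos : 0 < 1 - κ₁ + (κ₁ - κ₂) / x := by rw [hu]; positivity
    have h1 : HasDerivAt (fun x : ℝ => 1 - κ₁ + (κ₁ - κ₂) / x)
        (-(κ₁ - κ₂) / x ^ 2) x := by
      have heq : (fun x : ℝ => 1 - κ₁ + (κ₁ - κ₂) / x)
          = fun x : ℝ => 1 - κ₁ + (κ₁ - κ₂) * x⁻¹ := by
        funext y; rw [div_eq_mul_inv]
      rw [heq]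
      have h2 := ((hasDerivAt_inv hx0).const_mul (κ₁ - κ₂)).const_add (1 - κ₁)
      convert h2 using 1
      · rfl
      · rfl
      field_simp
    have hlog : HasDerivAt (fun x : ℝ => Real.log (1 - κ₁ + (κ₁ - κ₂) / x))
        ((-(κ₁ - κ₂) / x ^ 2) / (1 - κ₁ + (κ₁ - κ₂) / x)) x := h1.log (ne_of_gt hupos)
    have hDden : HasDerivAt (fun x : ℝ => x * (1 - κ₁) + κ₁ - κ₂) (1 - κ₁) x := by
      have heq : (fun x : ℝ => x * (1 - κ₁) + κ₁ - κ₂)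
          = fun x : ℝ => x * (1 - κ₁) + (κ₁ - κ₂) := by
        funext y; ring
      rw [heq]
      simpa using ((hasDerivAt_id x).mul_const (1 - κ₁)).add_const (κ₁ - κ₂)
    have hdiv : HasDerivAt (fun x : ℝ => (κ₁ - κ₂) / (x * (1 - κ₁) + κ₁ - κ₂))
        ((0 * (x * (1 - κ₁) + κ₁ - κ₂) - (κ₁ - κ₂) * (1 - κ₁)) /
          (x * (1 - κ₁) + κ₁ - κ₂) ^ 2) x :=
      (hasDerivAt_const x (κ₁ - κ₂)).div hDden hDne
    have := hlog.sub hdiv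
    convert this using 1
    · rfl
    · rfl
    · rfl
    rw [hu]
    field_simp
    ring
  have hcont : ContinuousOn g S := fun x hx => ((hg' x hx).continuousAt).continuousWithinAt
  have hneg : ∀ x ∈ interior S, deriv g x < 0 := by
    intro x hx
    rw [hopen.interior_eq] at hx
    rw [(hg' x hx).deriv]
    have hD := hx.2
    have hx0 := hx.1
    have : 0 < (κ₁ - κ₂) ^ 2 / (x * (x * (1 - κ₁) + κ₁ - κ₂) ^ 2) := by positivity
    linarith
  have hg : StrictAntiOn g S := strictAntiOn_of_deriv_neg hconv hcont hneg
  intro x hx y hy hxy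
  rw [(hf' x hx).deriv, (hf' y hy).deriv]
  exact hg hx hy hxy
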